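/- Let h ≥ 1 and h' ≥ 0, and let H be the complete bipartite graph with parts U = {u_1,…,u_h} and U' = {u'_1,…,u'_{h'}}. Let G be a connected bipartite simple graph with bipartition (V, V'), and for each vertex x of G let w_x : V(H) → ℚ≥0 be a weight function. Then the weighted homomorphism sum Z_H(G, W) = ∑_{σ ∈ Hom(G,H)} ∏_{x ∈ V(G)} w_x(σ(x)) satisfies Z_H(G, W) = ∏_{v ∈ V} (∑_{c=1}^{h} w_v(u_c)) · ∏_{v' ∈ V'} (∑_{c'=1}^{h'} w_{v'}(u'_{c'})) + ∏_{v' ∈ V'} (∑_{c=1}^{h} w_{v'}(u_c)) · ∏_{v ∈ V} (∑_{c'=1}^{h'} w_v(u'_{c'})). -/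

import Mathlib

/-!
STATEMENT 0: For the complete bipartite graph `H` with parts `U = Fin h` (`h ≥ 1`)
and `U' = Fin h'`, and a connected bipartite simple graph `G` with bipartition
`(S, Sᶜ)`, the weighted homomorphism sum factors as in the paper.
-/

open scoped Classical in
theorem stmt0 (h h' : ℕ) (hh : 1 ≤ h)
    {α : Type*} [Fintype α] (G : SimpleGraph α)
    (hconn : G.Connected)
    (S : Set α)
    (hbip : ∀ a b : α, G.Adj a b → (a ∈ S ↔ b ∉ S))
    (w : α → (Fin h ⊕ Fin h') → NNRat) :
    ∑ σ : α → (Fin h ⊕ Fin h'),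
        (if ∀ a b : α, G.Adj a b →
            (completeBipartiteGraph (Fin h) (Fin h')).Adj (σ a) (σ b)
         then ∏ x : α, w x (σ x) else 0)
      = (∏ v ∈ S.toFinset, ∑ c : Fin h, w v (Sum.inl c)) *
          (∏ v' ∈ Sᶜ.toFinset, ∑ c' : Fin h', w v' (Sum.inr c')) +
        (∏ v' ∈ Sᶜ.toFinset, ∑ c : Fin h, w v' (Sum.inl c)) *
          (∏ v ∈ S.toFinset, ∑ c' : Fin h', w v (Sum.inr c')) := by
  classical
  set t1 : α → Finset (Fin h ⊕ Fin h') :=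
    fun x => if x ∈ S then Finset.univ.image Sum.inl else Finset.univ.image Sum.inr with ht1
  set t2 : α → Finset (Fin h ⊕ Fin h') :=
    fun x => if x ∈ S then Finset.univ.image Sum.inr else Finset.univ.image Sum.inl with ht2
  have hmem1 : ∀ (σ : α → Fin h ⊕ Fin h') x, σ x ∈ t1 x ↔ ((σ x).isLeft = true ↔ x ∈ S) := by
    intro σ x
    by_cases hx : x ∈ S <;> simp [ht1, hx] <;> cases σ x <;> simp
  have hmem2 : ∀ (σ : α → Fin h ⊕ Fin h') x, σ x ∈ t2 x ↔ ((σ x).isLeft = true ↔ x ∉ S) := by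
    intro σ x
    by_cases hx : x ∈ S <;> simp [ht2, hx] <;> cases σ x <;> simp
  have hadj : ∀ (u v : Fin h ⊕ Fin h'),
      (completeBipartiteGraph (Fin h) (Fin h')).Adj u v ↔ ¬ (u.isLeft = v.isLeft) := by
    intro u v; cases u <;> cases v <;> simp
  -- characterization of homomorphisms
  have hchar : ∀ σ : α → Fin h ⊕ Fin h',
      (∀ a b : α, G.Adj a b →
        (completeBipartiteGraph (Fin h) (Fin h')).Adj (σ a) (σ b))
      ↔ (σ ∈ Fintype.piFinset t1 ∨ σ ∈ Fintype.piFinset t2) := by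
    intro σ
    simp only [Fintype.mem_piFinset, hmem1, hmem2]
    constructor
    · intro hσ
      have step : ∀ x y : α, ∀ _ : G.Walk x y,
          (((σ x).isLeft = true) ↔ x ∈ S) ↔ (((σ y).isLeft = true) ↔ y ∈ S) := by
        intro x y p
        induction p with
        | nil => rfl
        | @cons a b c hab p ih =>
          have h1 := (hadj _ _).mp (hσ _ _ hab)
          have h2 := hbip _ _ hab
          have h3 : ((σ a).isLeft = true) ↔ ¬ ((σ b).isLeft = true) := by
            cases hA : (σ a).isLeft <;> cases hB : (σ b).isLeft <;> simp_all
          tauto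
      obtain ⟨x0⟩ := hconn.nonempty
      by_cases hc : ((σ x0).isLeft = true) ↔ x0 ∈ S
      · left; intro x
        obtain ⟨p⟩ := hconn x0 x
        exact (step x0 x p).mp hc
      · right; intro x
        obtain ⟨p⟩ := hconn x0 x
        have := step x0 x p
        tauto
    · intro hσ a b hab
      rw [hadj]
      have h2 := hbip _ _ hab
      rcases hσ with hσ | hσ <;>
      · have ha := hσ a; have hb := hσ b
        intro heq
        cases hA : (σ a).isLeft <;> cases hB : (σ b).isLeft <;> simp_all
  -- rewrite LHS as sum over filter
  rw [Finset.sum_ite, Finset.sum_const, smul_zero, add_zero]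
  have hfilter : (Finset.univ.filter fun σ : α → Fin h ⊕ Fin h' =>
      ∀ a b : α, G.Adj a b →
        (completeBipartiteGraph (Fin h) (Fin h')).Adj (σ a) (σ b))
      = Fintype.piFinset t1 ∪ Fintype.piFinset t2 := by
    ext σ
    rw [Finset.mem_filter, Finset.mem_union]
    exact ⟨fun hx => (hchar σ).mp hx.2, fun hx => ⟨Finset.mem_univ _, (hchar σ).mpr hx⟩⟩
  rw [hfilter]
  have hdisj : Disjoint (Fintype.piFinset t1) (Fintype.piFinset t2) := by
    rw [Finset.disjoint_left]
    intro σ h1 h2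
    obtain ⟨x0⟩ := hconn.nonempty
    rw [Fintype.mem_piFinset] at h1 h2
    have := (hmem1 σ x0).mp (h1 x0)
    have := (hmem2 σ x0).mp (h2 x0)
    tauto
  rw [Finset.sum_union hdisj]
  -- each part
  have hprod : ∀ t : α → Finset (Fin h ⊕ Fin h'),
      ∑ σ ∈ Fintype.piFinset t, ∏ x : α, w x (σ x) = ∏ x : α, ∑ y ∈ t x, w x y :=
    fun t => (Finset.prod_univ_sum t _).symm
  have hsplit : ∀ f : α → NNRat, ∏ x : α, f x = (∏ x ∈ S.toFinset, f x) * ∏ x ∈ Sᶜ.toFinset, f x := by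
    intro f
    rw [Set.toFinset_compl, Finset.prod_mul_prod_compl]
  have hinl : ∀ x : α, ∑ y ∈ Finset.univ.image Sum.inl, w x y = ∑ c : Fin h, w x (Sum.inl c) := by
    intro x; rw [Finset.sum_image (by simp [Sum.inl_injective])]
  have hinr : ∀ x : α, ∑ y ∈ Finset.univ.image Sum.inr, w x y = ∑ c : Fin h', w x (Sum.inr c) := by
    intro x; rw [Finset.sum_image (by simp [Sum.inr_injective])]
  have hsum1 : ∀ x : α, (∑ y ∈ t1 x, w x y) =
      if x ∈ S then ∑ c : Fin h, w x (Sum.inl c) else ∑ c' : Fin h', w x (Sum.inr c') := by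
    intro x
    by_cases hx : x ∈ S
    · simp only [ht1]; rw [if_pos hx, if_pos hx]; exact hinl x
    · simp only [ht1]; rw [if_neg hx, if_neg hx]; exact hinr x
  have hsum2 : ∀ x : α, (∑ y ∈ t2 x, w x y) =
      if x ∈ S then ∑ c' : Fin h', w x (Sum.inr c') else ∑ c : Fin h, w x (Sum.inl c) := by
    intro x
    by_cases hx : x ∈ S
    · simp only [ht2]; rw [if_pos hx, if_pos hx]; exact hinr x
    · simp only [ht2]; rw [if_neg hx, if_neg hx]; exact hinl x
  rw [hprod t1, hprod t2, Finset.prod_congr rfl fun x _ => hsum1 x,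
    Finset.prod_congr rfl fun x _ => hsum2 x, hsplit, hsplit]
  have e1 : (∏ x ∈ S.toFinset,
      if x ∈ S then ∑ c : Fin h, w x (Sum.inl c) else ∑ c' : Fin h', w x (Sum.inr c'))
      = ∏ x ∈ S.toFinset, ∑ c : Fin h, w x (Sum.inl c) :=
    Finset.prod_congr rfl fun x hx => if_pos (Set.mem_toFinset.mp hx)
  have e2 : (∏ x ∈ Sᶜ.toFinset,
      if x ∈ S then ∑ c : Fin h, w x (Sum.inl c) else ∑ c' : Fin h', w x (Sum.inr c'))
      = ∏ x ∈ Sᶜ.toFinset, ∑ c' : Fin h', w x (Sum.inr c') :=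
    Finset.prod_congr rfl fun x hx => if_neg (by simpa using Set.mem_toFinset.mp hx)
  have e3 : (∏ x ∈ S.toFinset,
      if x ∈ S then ∑ c' : Fin h', w x (Sum.inr c') else ∑ c : Fin h, w x (Sum.inl c))
      = ∏ x ∈ S.toFinset, ∑ c' : Fin h', w x (Sum.inr c') :=
    Finset.prod_congr rfl fun x hx => if_pos (Set.mem_toFinset.mp hx)
  have e4 : (∏ x ∈ Sᶜ.toFinset,
      if x ∈ S then ∑ c' : Fin h', w x (Sum.inr c') else ∑ c : Fin h, w x (Sum.inl c))
      = ∏ x ∈ Sᶜ.toFinset, ∑ c : Fin h, w x (Sum.inl c) :=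
    Finset.prod_congr rfl fun x hx => if_neg (by simpa using Set.mem_toFinset.mp hx)
  rw [e1, e2, e3, e4, mul_comm (∏ x ∈ S.toFinset, ∑ c' : Fin h', w x (Sum.inr c'))]
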